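/- Let E(α) be the continuous extension of (α(1−α)/(1−2α))·log₂(α⁻¹−1) on (0,1). For γ₀ > 0 and θ ∈ (0,1), the maximizer of E(α) over the feasible set {α ∈ (0,1) : α ≥ γ₀(1−θ)/(θ+γ₀(1−θ))} is α* = max(1/2, (θ/((1−θ)γ₀) + 1)⁻¹). -/

import Mathlib

open Real

/-- `sinh u ≤ u * cosh u` for `u ≥ 0` (i.e. `tanh u ≤ u`). -/
lemma sinh_le_mul_cosh {u : ℝ} (hu : 0 ≤ u) : sinh u ≤ u * cosh u := by
  have hmono : MonotoneOn (fun v : ℝ => v * cosh v - sinh v) (Set.Ici 0) := by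
    apply monotoneOn_of_deriv_nonneg (convex_Ici 0)
    · exact (Continuous.continuousOn (by continuity))
    · intro x hx
      exact (((hasDerivAt_id x).mul (hasDerivAt_cosh x)).sub
        (hasDerivAt_sinh x)).differentiableAt.differentiableWithinAt
    · intro x hx
      rw [interior_Ici, Set.mem_Ioi] at hx
      have hd : HasDerivAt (fun v : ℝ => v * cosh v - sinh v)
          (1 * cosh x + x * sinh x - cosh x) x :=
        ((hasDerivAt_id x).mul (hasDerivAt_cosh x)).sub (hasDerivAt_sinh x)
      rw [hd.deriv]
      have : 0 ≤ sinh x := sinh_nonneg_iff.mpr hx.le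
      nlinarith
  simpa using hmono (Set.self_mem_Ici) (Set.mem_Ici.mpr hu) hu

lemma log_ratio_le {t : ℝ} (ht0 : 0 < t) (ht1 : t < 1) :
    log (1+t) - log (1-t) ≤ 2*t/(1-t^2) := by
  have h1 : (0:ℝ) < 1 - t := by linarith
  have h2 : (0:ℝ) < 1 + t := by linarith
  have hpos : (0:ℝ) < 1 - t^2 := by nlinarith
  have hy : (0:ℝ) < (1+t)/(1-t) := div_pos h2 h1
  have hlog : 0 ≤ log ((1+t)/(1-t)) := log_nonneg (by rw [le_div_iff₀ h1]; linarith)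
  have hs : log ((1+t)/(1-t)) ≤ sinh (log ((1+t)/(1-t))) := Real.self_le_sinh_iff.mpr hlog
  have hsinh : sinh (log ((1+t)/(1-t))) = 2*t/(1-t^2) := by
    rw [sinh_eq, exp_log hy, exp_neg, exp_log hy, inv_div]
    field_simp [h1.ne', h2.ne', hpos.ne']
    ring
  rw [hsinh] at hs
  rw [← log_div h2.ne' h1.ne']
  exact hs

lemma le_log_ratio {t : ℝ} (ht0 : 0 < t) (ht1 : t < 1) :
    2*t/(1+t^2) ≤ log (1+t) - log (1-t) := by
  have h1 : (0:ℝ) < 1 - t := by linarith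
  have h2 : (0:ℝ) < 1 + t := by linarith
  have hpos : (0:ℝ) < 1 - t^2 := by nlinarith
  have hpos2 : (0:ℝ) < 1 + t^2 := by positivity
  have hy : (0:ℝ) < (1+t)/(1-t) := div_pos h2 h1
  have hlog : 0 ≤ log ((1+t)/(1-t)) := log_nonneg (by rw [le_div_iff₀ h1]; linarith)
  have htanh := sinh_le_mul_cosh hlog
  have hsinh : sinh (log ((1+t)/(1-t))) = 2*t/(1-t^2) := by
    rw [sinh_eq, exp_log hy, exp_neg, exp_log hy, inv_div]
    field_simp [h1.ne', h2.ne', hpos.ne']; ring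
  have hcosh : cosh (log ((1+t)/(1-t))) = (1+t^2)/(1-t^2) := by
    rw [cosh_eq, exp_log hy, exp_neg, exp_log hy, inv_div]
    field_simp [h1.ne', h2.ne', hpos.ne']; ring
  rw [hsinh, hcosh, ← mul_div_assoc, div_le_div_iff₀ hpos hpos] at htanh
  have h3 : 2*t ≤ log ((1+t)/(1-t)) * (1+t^2) :=
    (mul_le_mul_iff_of_pos_right hpos).mp htanh
  rw [← log_div h2.ne' h1.ne', div_le_iff₀ hpos2]
  exact h3

noncomputable def auxg (t : ℝ) : ℝ := (1 - t^2)/(2*t) * (log (1+t) - log (1-t))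

lemma auxg_hasDeriv {x : ℝ} (hx0 : 0 < x) (hx1 : x < 1) :
    HasDerivAt auxg
      (-((1+x^2)/(2*x^2)) * (log (1+x) - log (1-x)) + 1/x) x := by
  have h1 : (0:ℝ) < 1 - x := by linarith
  have h2 : (0:ℝ) < 1 + x := by linarith
  have hp : HasDerivAt (fun t : ℝ => (1 - t^2)/(2*t)) (-((1+x^2)/(2*x^2))) x := by
    have hnum : HasDerivAt (fun t : ℝ => 1 - t^2) (-(2*x)) x := by
      simpa using (hasDerivAt_pow 2 x).const_sub 1
    have hden : HasDerivAt (fun t : ℝ => 2*t) 2 x := by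
      simpa using (hasDerivAt_id x).const_mul 2
    have := hnum.div hden (by positivity)
    refine this.congr_deriv ?_
    field_simp
    ring
  have hL : HasDerivAt (fun t : ℝ => log (1+t) - log (1-t)) (1/(1+x) + 1/(1-x)) x := by
    have hA : HasDerivAt (fun t : ℝ => log (1+t)) (1/(1+x)) x := by
      have : HasDerivAt (fun t : ℝ => 1+t) 1 x := by simpa using (hasDerivAt_id x).const_add 1
      simpa using this.log h2.ne'
    have hB : HasDerivAt (fun t : ℝ => log (1-t)) (-(1/(1-x))) x := by
      have : HasDerivAt (fun t : ℝ => 1-t) (-1) x := by simpa using (hasDerivAt_id x).const_sub 1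
      have h := this.log h1.ne'
      convert h using 1
      field_simp
    exact (hA.sub hB).congr_deriv (by ring)
  have := hp.mul hL
  refine this.congr_deriv ?_
  have : (1 - x^2)/(2*x) * (1/(1+x) + 1/(1-x)) = 1/x := by
    field_simp
    ring
  rw [this]

lemma auxg_le_one {t : ℝ} (ht0 : 0 < t) (ht1 : t < 1) : auxg t ≤ 1 := by
  have hpos : (0:ℝ) < 1 - t^2 := by nlinarith
  have h := log_ratio_le ht0 ht1
  have hcoef : (0:ℝ) < (1 - t^2)/(2*t) := by positivity
  calc auxg t ≤ (1 - t^2)/(2*t) * (2*t/(1-t^2)) := mul_le_mul_of_nonneg_left h hcoef.le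
    _ = 1 := by field_simp

lemma auxg_anti : AntitoneOn auxg (Set.Ioo (0:ℝ) 1) := by
  apply antitoneOn_of_deriv_nonpos (convex_Ioo 0 1)
  · intro x hx
    exact (auxg_hasDeriv hx.1 hx.2).continuousAt.continuousWithinAt
  · rw [interior_Ioo]
    intro x hx
    exact (auxg_hasDeriv hx.1 hx.2).differentiableAt.differentiableWithinAt
  · rw [interior_Ioo]
    intro x hx
    obtain ⟨hx0, hx1⟩ := hx
    rw [(auxg_hasDeriv hx0 hx1).deriv]
    have hL := le_log_ratio hx0 hx1
    have hcoef : (0:ℝ) < (1+x^2)/(2*x^2) := by positivity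
    have h := mul_le_mul_of_nonneg_left hL hcoef.le
    have heq : (1+x^2)/(2*x^2) * (2*x/(1+x^2)) = 1/x := by
      field_simp
    rw [heq] at h
    nlinarith [h]

noncomputable def auxE (α : ℝ) : ℝ :=
  if α = 1 / 2 then (1 / 2) * Real.logb 2 (Real.exp 1)
  else (α * (1 - α) / (1 - 2 * α)) * Real.logb 2 (α⁻¹ - 1)

lemma auxE_half : auxE (1/2) = 1/(2 * log 2) := by
  rw [auxE, if_pos rfl, Real.logb, Real.log_exp]
  ring

lemma auxE_eq {α : ℝ} (h0 : 0 < α) (h1 : α < 1) (hne : α ≠ 1/2) :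
    auxE α = auxg (|2*α - 1|) / (2 * log 2) := by
  have hl2 : (0:ℝ) < log 2 := log_pos (by norm_num)
  have h1α : (0:ℝ) < 1 - α := by linarith
  have hinv : α⁻¹ - 1 = (1-α)/α := by field_simp
  rw [auxE, if_neg hne, Real.logb, hinv, log_div h1α.ne' h0.ne']
  rcases hne.lt_or_gt with h | h
  · have hne2 : (1:ℝ) - 2*α ≠ 0 := by intro hh; apply hne; linarith
    rw [abs_of_neg (by linarith : 2*α - 1 < 0)]
    have ht : -(2*α - 1) = 1 - 2*α := by ring
    rw [ht, auxg]
    have e1 : 1 + (1 - 2*α) = 2*(1-α) := by ring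
    have e2 : 1 - (1 - 2*α) = 2*α := by ring
    rw [e1, e2, log_mul two_ne_zero h1α.ne', log_mul two_ne_zero h0.ne']
    field_simp
    ring
  · have hne2 : (1:ℝ) - 2*α ≠ 0 := by intro hh; apply hne; linarith
    rw [abs_of_pos (by linarith : 0 < 2*α - 1), auxg]
    have e1 : 1 + (2*α - 1) = 2*α := by ring
    have e2 : 1 - (2*α - 1) = 2*(1-α) := by ring
    have hne3 : 2*α - 1 ≠ 0 := by intro hh; apply hne; linarith
    rw [e1, e2, log_mul two_ne_zero h0.ne', log_mul two_ne_zero h1α.ne']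
    field_simp [hne2, hne3, hl2.ne']
    ring_nf
    rw [show (-1 + α*2) = -(1 - α*2) by ring, inv_neg]
    ring

/-- The maximizer of the (continuously extended) expected throughput
`E(α) = (α(1−α)/(1−2α))·log₂(α⁻¹−1)` over the feasible set
`{α ∈ (0,1) : α ≥ γ₀(1−θ)/(θ+γ₀(1−θ))}` is `α* = max(1/2, (θ/((1−θ)γ₀)+1)⁻¹)`. -/
theorem optimal_harvest_ratio_direct (γ₀ θ : ℝ) (hγ : 0 < γ₀) (hθ : θ ∈ Set.Ioo (0 : ℝ) 1) :
    letI E : ℝ → ℝ := fun α => if α = 1 / 2 then (1 / 2) * logb 2 (exp 1)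
      else (α * (1 - α) / (1 - 2 * α)) * logb 2 (α⁻¹ - 1)
    letI S : Set ℝ := {α | α ∈ Set.Ioo (0 : ℝ) 1 ∧ γ₀ * (1 - θ) / (θ + γ₀ * (1 - θ)) ≤ α}
    letI αstar : ℝ := max (1 / 2) (θ / ((1 - θ) * γ₀) + 1)⁻¹
    αstar ∈ S ∧ ∀ α ∈ S, E α ≤ E αstar := by
  obtain ⟨hθ0, hθ1⟩ := hθ
  have hl2 : (0:ℝ) < log 2 := log_pos (by norm_num)
  set c : ℝ := γ₀ * (1 - θ) / (θ + γ₀ * (1 - θ)) with hc_def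
  have hden : 0 < θ + γ₀ * (1 - θ) := by nlinarith
  have hc0 : 0 < c := div_pos (by nlinarith) hden
  have hc1 : c < 1 := by rw [hc_def, div_lt_one hden]; nlinarith
  have hceq : (θ / ((1 - θ) * γ₀) + 1)⁻¹ = c := by
    have hb : ((1:ℝ)-θ)*γ₀ ≠ 0 := (mul_pos (by linarith) hγ).ne'
    rw [hc_def, div_add_one hb, inv_div]
    ring
  rw [hceq]
  have hmem : ∀ x : ℝ, x ∈ ({α : ℝ | α ∈ Set.Ioo (0:ℝ) 1 ∧ c ≤ α}) ↔
      (0 < x ∧ x < 1) ∧ c ≤ x := by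
    intro x; simp [Set.mem_setOf_eq, Set.mem_Ioo]
  constructor
  · refine (hmem _).mpr ⟨⟨lt_max_of_lt_left (by norm_num), max_lt (by norm_num) hc1⟩,
      le_max_right _ _⟩
  · intro α hα
    obtain ⟨⟨hα0, hα1⟩, hcα⟩ := (hmem α).mp hα
    show auxE α ≤ auxE (max (1/2) c)
    by_cases hc : c ≤ 1/2
    · rw [max_eq_left hc, auxE_half]
      by_cases hne : α = 1/2
      · rw [hne, auxE_half]
      · rw [auxE_eq hα0 hα1 hne]
        have ht0 : 0 < |2*α - 1| := abs_pos.mpr (by intro hh; apply hne; linarith)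
        have ht1 : |2*α - 1| < 1 := abs_lt.mpr ⟨by linarith, by linarith⟩
        have hg := auxg_le_one ht0 ht1
        exact (div_le_div_iff_of_pos_right (by positivity)).mpr hg
    · push_neg at hc
      rw [max_eq_right hc.le]
      have hαhalf : 1/2 < α := lt_of_lt_of_le hc hcα
      rw [auxE_eq hα0 hα1 (ne_of_gt hαhalf), auxE_eq hc0 hc1 (ne_of_gt hc)]
      rw [abs_of_pos (by linarith : (0:ℝ) < 2*α - 1),
        abs_of_pos (by linarith : (0:ℝ) < 2*c - 1)]
      have hg : auxg (2*α - 1) ≤ auxg (2*c - 1) :=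
        auxg_anti ⟨by linarith, by linarith⟩ ⟨by linarith, by linarith⟩ (by linarith)
      exact (div_le_div_iff_of_pos_right (by positivity)).mpr hg
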